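/- Let Q be a skewed-gentle polarized quiver and k a field with char k ≠ 2. The map φ_Q : kQ → kQ̃/⟨R̃⟩ determined by e_i ↦ Σ_{σ∈S(i)} e_{(i,σ)} for all vertices i, α ↦ Σ_{τ∈S(t(α)), σ∈S(s(α))} τα_σ for all ordinary arrows α, and ε_i ↦ e_{(i,+)} − e_{(i,−)} for all special loops ε_i, is a k-algebra isomorphism; its inverse satisfies φ_Q^{-1}(e_{(i,±)}) = (1/2)(e_i ± ε_i) for every vertex i carrying a special loop. -/

import Mathlib

/- Core combinatorics of polarized quivers, letters, words, strings and bands,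
   following Geiß, "Homomorphisms between representations of skewed-gentle algebras". -/

namespace SG

open Classical

/-- Signs: `true` stands for `+1`, `false` for `-1`. -/
abbrev Sign := Bool

/-- The raw data of a polarized quiver: vertices, arrows, a set of special arrows,
and polarized source/target maps with values in `V × {±1}`. -/
structure PolQuiv where
  V : Type
  A : Type
  special : A → Prop
  src : A → V × Sign
  tgt : A → V × Sign

/-- The five kinds of letters associated to a polarized quiver:
direct (ordinary), inverse, special, trivial and trivial inverse letters. -/
inductive PLetter (V A : Type) where
  | ord : A → PLetter V A
  | inv : A → PLetter V A
  | sp : A → PLetter V A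
  | triv : V → Sign → PLetter V A
  | trivInv : V → Sign → PLetter V A

namespace PolQuiv

variable (Q : PolQuiv)

/-- `-(i,ρ) = (i,-ρ)`. -/
def nneg (p : Q.V × Sign) : Q.V × Sign := (p.1, !p.2)

/-- The axioms of a polarized quiver: finiteness, injectivity of the polarized source and
target maps, special arrows have polarization `-1` at both ends, and every special arrow
has a unique dual special arrow. -/
def IsPolarized : Prop :=
  Finite Q.V ∧ Finite Q.A ∧
  Function.Injective Q.src ∧ Function.Injective Q.tgt ∧
  (∀ a, Q.special a → (Q.src a).2 = false ∧ (Q.tgt a).2 = false) ∧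
  (∀ a, Q.special a → ∃! a', Q.special a' ∧ Q.src a' = Q.tgt a ∧ Q.tgt a' = Q.src a)

/-- The dual special arrow `ε'` of a special arrow `ε` (junk value on other arrows). -/
noncomputable def dual (a : Q.A) : Q.A :=
  if h : ∃ a', Q.special a' ∧ Q.src a' = Q.tgt a ∧ Q.tgt a' = Q.src a then h.choose else a

/-- An admissible path `a₁ a₂ ⋯ a_l` : `s(aᵢ) = -t(a_{i+1})`. -/
def IsAdmPath (p : List Q.A) : Prop :=
  p ≠ [] ∧ ∀ n a b, p[n]? = some a → p[n + 1]? = some b → Q.src a = Q.nneg (Q.tgt b)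

/-- An admissible polarized quiver has only finitely many admissible paths. -/
def IsAdmissible : Prop := Q.IsPolarized ∧ {p : List Q.A | Q.IsAdmPath p}.Finite

/-- A loop. -/
def IsLoopArr (a : Q.A) : Prop := (Q.src a).1 = (Q.tgt a).1

/-- A skewed-gentle polarized quiver: admissible, and all special arrows are loops. -/
def SkewedGentle : Prop := Q.IsAdmissible ∧ ∀ a, Q.special a → Q.IsLoopArr a

/-- A gentle polarized quiver: admissible with no special arrows. -/
def Gentle : Prop := Q.IsAdmissible ∧ ∀ a, ¬ Q.special a

abbrev Ltr := PLetter Q.V Q.A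
abbrev Wd := List (PLetter Q.V Q.A)

/-- `(i,ρ)` admits trivial letters iff it is not the source of a special arrow. -/
def trivOK (i : Q.V) (ρ : Sign) : Prop := ∀ ε, Q.special ε → Q.src ε ≠ (i, ρ)

/-- Validity of a letter for `Q`. -/
def IsLetter : Q.Ltr → Prop
  | .ord a => ¬ Q.special a
  | .inv a => ¬ Q.special a
  | .sp a => Q.special a
  | .triv i ρ => Q.trivOK i ρ
  | .trivInv i ρ => Q.trivOK i ρ

/-- The (partial) source of a letter; `none` encodes `*`. -/
def lsrc : Q.Ltr → Option (Q.V × Sign)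
  | .ord a => some (Q.src a)
  | .inv a => some (Q.tgt a)
  | .sp a => some ((Q.src a).1, false)
  | .triv _ _ => none
  | .trivInv i ρ => some (i, ρ)

/-- The (partial) target of a letter; `none` encodes `*`. -/
def ltgt : Q.Ltr → Option (Q.V × Sign)
  | .ord a => some (Q.tgt a)
  | .inv a => some (Q.src a)
  | .sp a => some ((Q.tgt a).1, false)
  | .triv i ρ => some (i, ρ)
  | .trivInv _ _ => none

/-- The inverse of a letter; `(ε^*)⁻¹ = (ε')^*`. -/
noncomputable def linv : Q.Ltr → Q.Ltr
  | .ord a => .inv a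
  | .inv a => .ord a
  | .sp a => .sp (Q.dual a)
  | .triv i ρ => .trivInv i ρ
  | .trivInv i ρ => .triv i ρ

/-- The inverse of a word. -/
noncomputable def winv (w : Q.Wd) : Q.Wd := (w.map Q.linv).reverse

/-- A word: all letters valid and `s(wᵢ) = -t(w_{i+1})`. -/
def IsWord (w : Q.Wd) : Prop :=
  (∀ l ∈ w, Q.IsLetter l) ∧
  ∀ n a b, w[n]? = some a → w[n + 1]? = some b →
    ∃ p, Q.lsrc a = some p ∧ Q.ltgt b = some (Q.nneg p)

/-- A word is right inextensible iff its last letter is a trivial letter. -/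
def RightInext (w : Q.Wd) : Prop := ∃ i ρ, w.getLast? = some (.triv i ρ)

/-- A word is left inextensible iff its inverse is right inextensible. -/
def LeftInext (w : Q.Wd) : Prop := Q.RightInext (Q.winv w)

/-- A string: a left and right inextensible word. -/
def IsString (w : Q.Wd) : Prop := Q.IsWord w ∧ Q.LeftInext w ∧ Q.RightInext w

/-- A band: a (nonempty) word `w` such that `ww` is also a word. -/
def IsBand (w : Q.Wd) : Prop := w ≠ [] ∧ Q.IsWord (w ++ w)

/-- A primitive word is not a proper power. -/
def Primitive (w : Q.Wd) : Prop :=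
  ¬ ∃ (v : Q.Wd) (n : ℕ), 2 ≤ n ∧ w = (List.replicate n v).flatten

/-- The rotation `w^{[k+1]} w_{[k]}` of a word. -/
def rot (w : Q.Wd) (k : ℕ) : Q.Wd := w.drop k ++ w.take k

/-- A symmetric string: `w = w⁻¹`. -/
def SymmString (w : Q.Wd) : Prop := Q.IsString w ∧ Q.winv w = w

/-- Primitive bands. -/
def pBa (w : Q.Wd) : Prop := Q.IsBand w ∧ Q.Primitive w

/-- A symmetric (primitive) band: `w⁻¹` is a rotation of `w`. -/
def SymmBand (w : Q.Wd) : Prop := Q.pBa w ∧ ∃ k, Q.winv w = Q.rot w k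

/-- A symmetric primitive band in standard form `ε^* v ζ^* v⁻¹`. -/
def StdSymmBand (w : Q.Wd) : Prop :=
  Q.pBa w ∧ ∃ (a b : Q.A) (v : Q.Wd), Q.special a ∧ Q.special b ∧
    w = .sp a :: (v ++ .sp b :: Q.winv v)

/-- `pBa'`: asymmetric primitive bands together with symmetric primitive bands in standard
form. -/
def pBa' (w : Q.Wd) : Prop :=
  (Q.pBa w ∧ ¬ ∃ k, Q.winv w = Q.rot w k) ∨ Q.StdSymmBand w

/-- The partial order on letters with a common target: `α < 1_{i,ρ} < β⁻¹`. -/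
def letterLT : Q.Ltr → Q.Ltr → Prop
  | .ord a, .triv i ρ => ¬ Q.special a ∧ Q.trivOK i ρ ∧ Q.tgt a = (i, ρ)
  | .ord a, .inv b => ¬ Q.special a ∧ ¬ Q.special b ∧ Q.tgt a = Q.src b
  | .triv i ρ, .inv b => ¬ Q.special b ∧ Q.trivOK i ρ ∧ Q.src b = (i, ρ)
  | _, _ => False

/-- The induced lexicographic order on words. -/
def wordLT (v w : Q.Wd) : Prop :=
  ∃ (p u u' : Q.Wd) (a b : Q.Ltr), v = p ++ a :: u ∧ w = p ++ b :: u' ∧ Q.letterLT a b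

def wordLE (v w : Q.Wd) : Prop := Q.wordLT v w ∨ v = w

/-- The associated gentle polarized quiver `Q̂`: all arrows become ordinary. -/
@[reducible] def hat : PolQuiv := ⟨Q.V, Q.A, fun _ => False, Q.src, Q.tgt⟩

/-- A vertex carrying a special loop. -/
def specialAt (i : Q.V) : Prop := ∃ ε, Q.special ε ∧ (Q.src ε).1 = i

/-- The special loop at a vertex, as an `Option`. -/
noncomputable def sloopL (i : Q.V) : Option Q.A :=
  if h : Q.specialAt i then some h.choose else none

/-- The `Q̂`-letter `ε^{δ1}` at a vertex carrying a special loop (junk otherwise). -/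
noncomputable def epsAt (i : Q.V) (δ : Bool) : Q.Ltr :=
  if h : Q.specialAt i then (if δ then .ord h.choose else .inv h.choose) else .triv i false

/-- The canonical map `F` on letters, from letters of `Q̂` to letters of `Q`. -/
noncomputable def Fmap : Q.Ltr → Q.Ltr
  | .ord a => if Q.special a then .sp a else .ord a
  | .inv a => if Q.special a then .sp (Q.dual a) else .inv a
  | .sp a => .sp a
  | .triv i ρ => if h : ρ = false ∧ Q.specialAt i then .sp h.2.choose else .triv i ρ
  | .trivInv i ρ => if h : ρ = false ∧ Q.specialAt i then .sp h.2.choose else .trivInv i ρ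

/-- `F` on words. -/
noncomputable def Fword (w : Q.Wd) : Q.Wd := w.map Q.Fmap

/-- Punctured letters: trivial letters `1_{i,-1}^{±1}` with a special loop at `i`. -/
def IsPunct : Q.Ltr → Prop
  | .triv i ρ => ρ = false ∧ Q.specialAt i
  | .trivInv i ρ => ρ = false ∧ Q.specialAt i
  | _ => False

def LeftPunct (w : Q.Wd) : Prop := ∃ l, w.head? = some l ∧ Q.IsPunct l
def RightPunct (w : Q.Wd) : Prop := ∃ l, w.getLast? = some l ∧ Q.IsPunct l

open Classical in
/-- The completion `x̄` of a string or band `x` for `Q̂`: apply `F` after reflecting at each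
punctured end. -/
noncomputable def completionW (w : Q.Wd) : Q.Wd :=
  if Q.LeftPunct w then
    if Q.RightPunct w then Q.Fword w ++ Q.Fword (Q.hat.winv ((w.drop 1).dropLast))
    else Q.Fword (Q.hat.winv (w.drop 1)) ++ Q.Fword w
  else
    if Q.RightPunct w then Q.Fword w ++ Q.Fword (Q.hat.winv w.dropLast)
    else Q.Fword w

/-- The letter of `A(w)` at position `k`, for `w` a string: special letters `ε^*` are
replaced by `ε` if `(w_{[k-1]})⁻¹ > w^{[k+1]}` and by `ε⁻¹` if `(w_{[k-1]})⁻¹ < w^{[k+1]}`. -/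
def ALetterStr (w : Q.Wd) (k : ℕ) (xl : Q.Ltr) : Prop :=
  match w[k]? with
  | some (.sp a) =>
      (xl = .ord a ∧ Q.wordLT (w.drop (k + 1)) (Q.winv (w.take k))) ∨
      (xl = .inv a ∧ Q.wordLT (Q.winv (w.take k)) (w.drop (k + 1)))
  | some l => xl = l
  | none => False

/-- The letter of `A(w)` at position `k`, for `w` a band, with the comparison
`w_{[k-1]}⁻¹ (w^{[k+1]})⁻¹` versus `w^{[k+1]} w_{[k-1]}`. -/
def ALetterBand (w : Q.Wd) (k : ℕ) (xl : Q.Ltr) : Prop :=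
  match w[k]? with
  | some (.sp a) =>
      (xl = .ord a ∧
        Q.wordLT (w.drop (k + 1) ++ w.take k) (Q.winv (w.drop (k + 1) ++ w.take k))) ∨
      (xl = .inv a ∧
        Q.wordLT (Q.winv (w.drop (k + 1) ++ w.take k)) (w.drop (k + 1) ++ w.take k))
  | some l => xl = l
  | none => False

/-- `x = A(w)` for an asymmetric string `w`. -/
def AStrAsym (w x : Q.Wd) : Prop :=
  Q.IsString w ∧ Q.winv w ≠ w ∧ x.length = w.length ∧
  ∀ k xl, x[k]? = some xl → Q.ALetterStr w k xl

/-- `x = A(w)` for a symmetric string `w = v ε^* v⁻¹`. -/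
def AStrSym (w x : Q.Wd) : Prop :=
  Q.IsString w ∧ Q.winv w = w ∧
  ∃ (v : Q.Wd) (a : Q.A), Q.special a ∧ w = v ++ .sp a :: Q.winv v ∧
    ∃ y : Q.Wd, y.length = v.length ∧ (∀ k xl, y[k]? = some xl → Q.ALetterStr w k xl) ∧
      x = y ++ [.triv (Q.src a).1 false]

/-- `x = A(w)` for an asymmetric primitive band `w`. -/
def ABandAsym (w x : Q.Wd) : Prop :=
  Q.pBa w ∧ (¬ ∃ k, Q.winv w = Q.rot w k) ∧ x.length = w.length ∧
  ∀ k xl, x[k]? = some xl → Q.ALetterBand w k xl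

/-- `x = A(w)` for a symmetric band in standard form `w = ε_a^* v ε_b^* v⁻¹`. -/
def ABandSym (w x : Q.Wd) : Prop :=
  Q.pBa w ∧ ∃ (a b : Q.A) (v : Q.Wd), Q.special a ∧ Q.special b ∧
    w = .sp a :: (v ++ .sp b :: Q.winv v) ∧
    ∃ y : Q.Wd, y.length = v.length ∧
      (∀ k xl, y[k]? = some xl → Q.ALetterBand w (k + 1) xl) ∧
      x = .trivInv (Q.src a).1 false :: (y ++ [.triv (Q.src b).1 false])

/-- `x = A(w)` for `w ∈ St(Q) ∪ pBa'(Q)`. -/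
def ARel (w x : Q.Wd) : Prop :=
  Q.AStrAsym w x ∨ Q.AStrSym w x ∨ Q.ABandAsym w x ∨ Q.ABandSym w x

/-- Admissible strings for `Q̂` (with respect to `F`), following Qiu–Zhou. -/
def AdmStr (x : Q.Wd) : Prop :=
  Q.hat.IsString x ∧
  (∀ k a, (x[k]? = some (.ord a) ∨ x[k]? = some (.inv a)) → Q.special a →
    Q.hat.winv (x.take k) ≠ x.drop k ∧
    (x[k]? = some (.ord a) ↔ Q.hat.wordLT (x.drop (k + 1)) (Q.hat.winv (x.take k)))) ∧
  (Q.LeftPunct x → Q.RightPunct x →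
    Q.IsBand (Q.completionW x) ∧ Q.Primitive (Q.completionW x))

/-- Admissible bands for `Q̂` (with respect to `F`). -/
def AdmBand (x : Q.Wd) : Prop :=
  Q.hat.IsBand x ∧ Q.hat.Primitive x ∧
  (∀ k a, (x[k]? = some (.ord a) ∨ x[k]? = some (.inv a)) → Q.special a →
    Q.hat.winv (x.drop (k + 1) ++ x.take k) ≠ x.drop (k + 1) ++ x.take k ∧
    (x[k]? = some (.ord a) ↔
      Q.hat.wordLT (x.drop (k + 1) ++ x.take k)
        (Q.hat.winv (x.drop (k + 1) ++ x.take k)))) ∧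
  (Q.IsBand (Q.Fword x) ∧ Q.Primitive (Q.Fword x) ∧
    ¬ ∃ k, Q.winv (Q.Fword x) = Q.rot (Q.Fword x) k)

/-- Admissible words. -/
def IsAdm (x : Q.Wd) : Prop := Q.AdmStr x ∨ Q.AdmBand x

end PolQuiv

end SG

namespace SG

open Classical

namespace PolQuiv

variable (Q : PolQuiv)

/-- The index sets `S(i)`: `{+,-}` (encoded `some true`, `some false`) at vertices with a
special loop, and `{o}` (encoded `none`) otherwise. -/
def SOK (i : Q.V) (σ : Option Bool) : Prop :=
  (Q.specialAt i ∧ (σ = some true ∨ σ = some false)) ∨ (¬ Q.specialAt i ∧ σ = none)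

/-- The vertices `(i,σ)` of the Gabriel quiver `Q̃` of `kQ`. -/
def TV : Type := {p : Q.V × Option Bool // Q.SOK p.1 p.2}

/-- The arrows `_τα_σ` of `Q̃`. -/
def TA : Type :=
  {t : Q.A × Option Bool × Option Bool //
    ¬ Q.special t.1 ∧ Q.SOK (Q.tgt t.1).1 t.2.1 ∧ Q.SOK (Q.src t.1).1 t.2.2}

end PolQuiv

open PolQuiv

variable (k : Type) [Field k] (Q : PolQuiv)

/-- Generators of the skewed-gentle algebra `kQ`: trivial paths and arrows. -/
abbrev GenQ := Q.V ⊕ Q.A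

/-- The defining relations of the skewed-gentle algebra
`kQ = k Q/⟨αβ (ordinary relations), ε'ε - e_{s(ε)}⟩`,
together with the path-algebra relations for the trivial paths. -/
inductive PARel [Fintype Q.V] :
    FreeAlgebra k (GenQ Q) → FreeAlgebra k (GenQ Q) → Prop
  | ee : ∀ i j : Q.V,
      PARel (FreeAlgebra.ι k (Sum.inl i) * FreeAlgebra.ι k (Sum.inl j))
        (if i = j then FreeAlgebra.ι k (Sum.inl i) else 0)
  | et : ∀ a : Q.A,
      PARel (FreeAlgebra.ι k (Sum.inl (Q.tgt a).1) * FreeAlgebra.ι k (Sum.inr a))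
        (FreeAlgebra.ι k (Sum.inr a))
  | es : ∀ a : Q.A,
      PARel (FreeAlgebra.ι k (Sum.inr a) * FreeAlgebra.ι k (Sum.inl (Q.src a).1))
        (FreeAlgebra.ι k (Sum.inr a))
  | one : PARel (∑ i : Q.V, FreeAlgebra.ι k (Sum.inl i)) 1
  | zrel : ∀ a b : Q.A, ¬ Q.special a → ¬ Q.special b → Q.src a = Q.tgt b →
      PARel (FreeAlgebra.ι k (Sum.inr a) * FreeAlgebra.ι k (Sum.inr b)) 0
  | srel : ∀ ε : Q.A, Q.special ε →
      PARel (FreeAlgebra.ι k (Sum.inr (Q.dual ε)) * FreeAlgebra.ι k (Sum.inr ε))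
        (FreeAlgebra.ι k (Sum.inl (Q.src ε).1))

/-- The skewed-gentle algebra `kQ`. -/
abbrev kAlg [Fintype Q.V] := RingQuot (PARel k Q)

/-- Generators of `kQ̃`. -/
abbrev GenT := Q.TV ⊕ Q.TA

/-- The defining relations of `kQ̃/⟨R̃⟩`: the path-algebra relations of `Q̃` together
with the relations `R̃ = {Σ_σ _τα_σ · _σβ_ρ}` for each ordinary relation `αβ` of `kQ`. -/
inductive PARelT [Fintype Q.V] [Fintype Q.A] :
    FreeAlgebra k (GenT Q) → FreeAlgebra k (GenT Q) → Prop
  | ee : ∀ i j : Q.TV,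
      PARelT (FreeAlgebra.ι k (Sum.inl i) * FreeAlgebra.ι k (Sum.inl j))
        (if i = j then FreeAlgebra.ι k (Sum.inl i) else 0)
  | et : ∀ t : Q.TA,
      PARelT (FreeAlgebra.ι k (Sum.inl ⟨((Q.tgt t.1.1).1, t.1.2.1), t.2.2.1⟩) *
          FreeAlgebra.ι k (Sum.inr t))
        (FreeAlgebra.ι k (Sum.inr t))
  | es : ∀ t : Q.TA,
      PARelT (FreeAlgebra.ι k (Sum.inr t) *
          FreeAlgebra.ι k (Sum.inl ⟨((Q.src t.1.1).1, t.1.2.2), t.2.2.2⟩))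
        (FreeAlgebra.ι k (Sum.inr t))
  | one :
      PARelT (∑ p : Q.V × Option Bool,
          if h : Q.SOK p.1 p.2 then FreeAlgebra.ι k (Sum.inl ⟨p, h⟩) else 0) 1
  | rtilde : ∀ (a b : Q.A) (ha : ¬ Q.special a) (hb : ¬ Q.special b)
      (hab : Q.src a = Q.tgt b)
      (τ : Option Bool) (hτ : Q.SOK (Q.tgt a).1 τ)
      (ρ : Option Bool) (hρ : Q.SOK (Q.src b).1 ρ),
      PARelT (∑ σ : Option Bool,
          if h : Q.SOK (Q.tgt b).1 σ then
            FreeAlgebra.ι k (Sum.inr ⟨(a, τ, σ), ha, hτ, by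
              rw [show (Q.src a).1 = (Q.tgt b).1 from congrArg Prod.fst hab]
              exact h⟩) *
            FreeAlgebra.ι k (Sum.inr ⟨(b, σ, ρ), hb, h, hρ⟩)
          else 0) 0

/-- The algebra `kQ̃/⟨R̃⟩`. -/
abbrev kAlgT [Fintype Q.V] [Fintype Q.A] := RingQuot (PARelT k Q)
section Aux

variable {k : Type} [Field k] {Q : PolQuiv} [Fintype Q.V] [Fintype Q.A]

set_option linter.unusedSectionVars false

noncomputable def eV (i : Q.V) : kAlg k Q :=
  RingQuot.mkAlgHom k (PARel k Q) (FreeAlgebra.ι k (Sum.inl i))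

noncomputable def xA (a : Q.A) : kAlg k Q :=
  RingQuot.mkAlgHom k (PARel k Q) (FreeAlgebra.ι k (Sum.inr a))

noncomputable def eT (v : Q.TV) : kAlgT k Q :=
  RingQuot.mkAlgHom k (PARelT k Q) (FreeAlgebra.ι k (Sum.inl v))

noncomputable def yT (t : Q.TA) : kAlgT k Q :=
  RingQuot.mkAlgHom k (PARelT k Q) (FreeAlgebra.ι k (Sum.inr t))

lemma eV_mul (i j : Q.V) : eV (k := k) i * eV j = if i = j then eV (k := k) i else 0 := by
  have h := RingQuot.mkAlgHom_rel k (PARel.ee (k := k) (Q := Q) i j)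
  simpa [eV, map_mul, apply_ite (RingQuot.mkAlgHom k (PARel k Q))] using h

lemma eV_tgt_mul (a : Q.A) : eV (k := k) (Q.tgt a).1 * xA a = xA a := by
  have h := RingQuot.mkAlgHom_rel k (PARel.et (k := k) (Q := Q) a)
  simpa [eV, xA, map_mul] using h

lemma mul_eV_src (a : Q.A) : xA (k := k) a * eV (Q.src a).1 = xA a := by
  have h := RingQuot.mkAlgHom_rel k (PARel.es (k := k) (Q := Q) a)
  simpa [eV, xA, map_mul] using h

lemma sum_eV : (∑ i : Q.V, eV (k := k) i) = 1 := by
  have h := RingQuot.mkAlgHom_rel k (PARel.one (k := k) (Q := Q))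
  simpa [eV, map_sum] using h

lemma xA_zrel {a b : Q.A} (ha : ¬ Q.special a) (hb : ¬ Q.special b)
    (hab : Q.src a = Q.tgt b) : xA (k := k) a * xA b = 0 := by
  have h := RingQuot.mkAlgHom_rel k (PARel.zrel (k := k) (Q := Q) a b ha hb hab)
  simpa [xA, map_mul] using h

lemma xA_srel {e : Q.A} (he : Q.special e) :
    xA (k := k) (Q.dual e) * xA e = eV (Q.src e).1 := by
  have h := RingQuot.mkAlgHom_rel k (PARel.srel (k := k) (Q := Q) e he)
  simpa [xA, eV, map_mul] using h

lemma eV_mul_xA (j : Q.V) (a : Q.A) :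
    eV (k := k) j * xA a = if j = (Q.tgt a).1 then xA a else 0 := by
  by_cases h : j = (Q.tgt a).1
  · rw [if_pos h]; subst h; exact eV_tgt_mul a
  · rw [if_neg h, ← eV_tgt_mul a, ← mul_assoc, eV_mul, if_neg h, zero_mul]

lemma xA_mul_eV (a : Q.A) (j : Q.V) :
    xA (k := k) a * eV j = if (Q.src a).1 = j then xA a else 0 := by
  by_cases h : (Q.src a).1 = j
  · rw [if_pos h]; subst h; exact mul_eV_src a
  · rw [if_neg h, ← mul_eV_src a, mul_assoc, eV_mul, if_neg h, mul_zero]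

/- kAlgT relations -/

lemma eT_mul (v w : Q.TV) : eT (k := k) v * eT w = if v = w then eT (k := k) v else 0 := by
  have h := RingQuot.mkAlgHom_rel k (PARelT.ee (k := k) (Q := Q) v w)
  simpa [eT, map_mul, apply_ite (RingQuot.mkAlgHom k (PARelT k Q))] using h

lemma eT_tgt_mul (t : Q.TA) :
    eT (k := k) ⟨((Q.tgt t.1.1).1, t.1.2.1), t.2.2.1⟩ * yT t = yT t := by
  have h := RingQuot.mkAlgHom_rel k (PARelT.et (k := k) (Q := Q) t)
  simpa [eT, yT, map_mul] using h

lemma mul_eT_src (t : Q.TA) :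
    yT (k := k) t * eT ⟨((Q.src t.1.1).1, t.1.2.2), t.2.2.2⟩ = yT t := by
  have h := RingQuot.mkAlgHom_rel k (PARelT.es (k := k) (Q := Q) t)
  simpa [eT, yT, map_mul] using h

lemma sum_eT :
    (∑ p : Q.V × Option Bool, if h : Q.SOK p.1 p.2 then eT (k := k) ⟨p, h⟩ else 0) = 1 := by
  have h := RingQuot.mkAlgHom_rel k (PARelT.one (k := k) (Q := Q))
  simpa [eT, map_sum, apply_dite (RingQuot.mkAlgHom k (PARelT k Q))] using h

lemma yT_rtilde (a b : Q.A) (ha : ¬ Q.special a) (hb : ¬ Q.special b)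
    (hab : Q.src a = Q.tgt b) (τ : Option Bool) (hτ : Q.SOK (Q.tgt a).1 τ)
    (ρ : Option Bool) (hρ : Q.SOK (Q.src b).1 ρ) :
    (∑ σ : Option Bool,
      if h : Q.SOK (Q.tgt b).1 σ then
        yT (k := k) ⟨(a, τ, σ), ha, hτ, by
            rw [show (Q.src a).1 = (Q.tgt b).1 from congrArg Prod.fst hab]; exact h⟩ *
        yT ⟨(b, σ, ρ), hb, h, hρ⟩
      else 0) = 0 := by
  have h := RingQuot.mkAlgHom_rel k (PARelT.rtilde (k := k) (Q := Q) a b ha hb hab τ hτ ρ hρ)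
  simpa [yT, map_sum, map_mul, apply_dite (RingQuot.mkAlgHom k (PARelT k Q))] using h

lemma eT_mul_yT (v : Q.TV) (t : Q.TA) :
    eT (k := k) v * yT t = if v.1 = ((Q.tgt t.1.1).1, t.1.2.1) then yT t else 0 := by
  by_cases h : v.1 = ((Q.tgt t.1.1).1, t.1.2.1)
  · rw [if_pos h, show v = ⟨((Q.tgt t.1.1).1, t.1.2.1), t.2.2.1⟩ from Subtype.ext h]
    exact eT_tgt_mul t
  · erw [if_neg h, ← eT_tgt_mul t, ← mul_assoc, eT_mul,
      if_neg (fun hh => h (congrArg Subtype.val hh)), zero_mul]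

lemma yT_mul_eT (t : Q.TA) (v : Q.TV) :
    yT (k := k) t * eT v = if ((Q.src t.1.1).1, t.1.2.2) = v.1 then yT t else 0 := by
  by_cases h : ((Q.src t.1.1).1, t.1.2.2) = v.1
  · rw [if_pos h, show v = ⟨((Q.src t.1.1).1, t.1.2.2), t.2.2.2⟩ from Subtype.ext h.symm]
    exact mul_eT_src t
  · erw [if_neg h, ← mul_eT_src t, mul_assoc, eT_mul,
      if_neg (fun hh => h (congrArg Subtype.val hh)), mul_zero]

/- structural lemmas for skewed-gentle quivers -/

lemma sg_src_inj (hQ : Q.SkewedGentle) : Function.Injective Q.src := hQ.1.1.2.2.1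

lemma sg_pol (hQ : Q.SkewedGentle) :
    ∀ a, Q.special a → (Q.src a).2 = false ∧ (Q.tgt a).2 = false := hQ.1.1.2.2.2.2.1

lemma sg_dualEx (hQ : Q.SkewedGentle) :
    ∀ a, Q.special a → ∃! a', Q.special a' ∧ Q.src a' = Q.tgt a ∧ Q.tgt a' = Q.src a :=
  hQ.1.1.2.2.2.2.2

lemma sg_loop (hQ : Q.SkewedGentle) {e : Q.A} (he : Q.special e) :
    (Q.src e).1 = (Q.tgt e).1 := hQ.2 e he

lemma sg_special_src (hQ : Q.SkewedGentle) {e : Q.A} (he : Q.special e) :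
    Q.src e = ((Q.src e).1, false) := by
  have := (sg_pol hQ e he).1
  exact Prod.ext rfl this

lemma sg_special_tgt (hQ : Q.SkewedGentle) {e : Q.A} (he : Q.special e) :
    Q.tgt e = ((Q.src e).1, false) := by
  have := (sg_pol hQ e he).2
  exact Prod.ext (sg_loop hQ he).symm this

lemma sg_special_eq (hQ : Q.SkewedGentle) {e e' : Q.A} (he : Q.special e)
    (he' : Q.special e') (h : (Q.src e).1 = (Q.src e').1) : e = e' := by
  apply sg_src_inj hQ
  rw [sg_special_src hQ he, sg_special_src hQ he', h]

lemma sg_choose_eq (hQ : Q.SkewedGentle) {i : Q.V} (h : Q.specialAt i) {e : Q.A}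
    (he : Q.special e) (hi : (Q.src e).1 = i) : h.choose = e := by
  obtain ⟨hs, hf⟩ := h.choose_spec
  exact sg_special_eq hQ hs he (by rw [hf, hi])

lemma sg_dual_eq (hQ : Q.SkewedGentle) {e : Q.A} (he : Q.special e) : Q.dual e = e := by
  have hts : Q.tgt e = Q.src e := by rw [sg_special_tgt hQ he, sg_special_src hQ he]
  have hex : ∃ a', Q.special a' ∧ Q.src a' = Q.tgt e ∧ Q.tgt a' = Q.src e := by
    obtain ⟨a', ha', -⟩ := sg_dualEx hQ e he
    exact ⟨a', ha'⟩
  rw [PolQuiv.dual, dif_pos hex]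
  obtain ⟨hs, h1, -⟩ := hex.choose_spec
  exact sg_src_inj hQ (by rw [h1, hts])

lemma xA_sq (hQ : Q.SkewedGentle) {e : Q.A} (he : Q.special e) :
    xA (k := k) e * xA e = eV (Q.src e).1 := by
  have h := xA_srel (k := k) he
  rwa [sg_dual_eq hQ he] at h

/- SOK facts -/

lemma SOK_some {i : Q.V} {b : Bool} (h : Q.SOK i (some b)) : Q.specialAt i := by
  rcases h with ⟨h1, _⟩ | ⟨_, h2⟩
  · exact h1
  · exact absurd h2 (by simp)

lemma SOK_none {i : Q.V} (h : Q.SOK i none) : ¬ Q.specialAt i := by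
  rcases h with ⟨_, h2 | h2⟩ | ⟨h1, _⟩
  · exact absurd h2 (by simp)
  · exact absurd h2 (by simp)
  · exact h1

lemma SOK_some_iff {i : Q.V} {b : Bool} : Q.SOK i (some b) ↔ Q.specialAt i :=
  ⟨SOK_some, fun h => Or.inl ⟨h, by cases b <;> simp⟩⟩

lemma SOK_none_iff {i : Q.V} : Q.SOK i none ↔ ¬ Q.specialAt i :=
  ⟨SOK_none, fun h => Or.inr ⟨h, rfl⟩⟩

/- the idempotents in kAlg -/

noncomputable def Gv : Q.TV → kAlg k Q
  | ⟨(i, none), _⟩ => eV i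
  | ⟨(i, some b), h⟩ =>
      (2⁻¹ : k) • (eV i + (if b then xA (SOK_some h).choose else - xA (SOK_some h).choose))

@[simp] lemma Gv_none (i : Q.V) (h : Q.SOK i none) : Gv (k := k) ⟨(i, none), h⟩ = eV i := rfl

@[simp] lemma Gv_some (i : Q.V) (b : Bool) (h : Q.SOK i (some b)) :
    Gv (k := k) ⟨(i, some b), h⟩ =
      (2⁻¹ : k) • (eV i + (if b then xA (SOK_some h).choose else - xA (SOK_some h).choose)) :=
  rfl

/- generic idempotent computation -/

lemma half_orth {A : Type} [Ring A] [Algebra k A] (hchar : (2 : k) ≠ 0)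
    (u x : A) (hu : u * u = u) (hux : u * x = x) (hxu : x * u = x) (hxx : x * x = u)
    (s t : Bool) :
    ((2⁻¹ : k) • (u + (if s then x else -x))) * ((2⁻¹ : k) • (u + (if t then x else -x))) =
      if s = t then (2⁻¹ : k) • (u + (if s then x else -x)) else 0 := by
  have key : ∀ y z : A, ((2⁻¹ : k) • y) * ((2⁻¹ : k) • z) = ((2⁻¹ : k) * 2⁻¹) • (y * z) :=
    fun y z => by rw [smul_mul_assoc, mul_smul_comm, smul_smul]
  have h4 : ∀ w : A, ((2⁻¹ : k) * 2⁻¹) • ((2 : k) • w) = (2⁻¹ : k) • w := fun w => by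
    rw [smul_smul]
    congr 1
    field_simp
  have P1 : (u + x) * (u + x) = (2 : k) • (u + x) := by
    rw [add_mul, mul_add, mul_add, hu, hux, hxu, hxx, two_smul]
    abel
  have P2 : (u + x) * (u + -x) = 0 := by
    rw [add_mul, mul_add, mul_add, hu, mul_neg, mul_neg, hux, hxu, hxx]
    abel
  have P3 : (u + -x) * (u + x) = 0 := by
    simp only [add_mul, mul_add, mul_neg, neg_mul, hu, hux, hxu, hxx, neg_neg]
    abel
  have P4 : (u + -x) * (u + -x) = (2 : k) • (u + -x) := by
    simp only [add_mul, mul_add, mul_neg, neg_mul, hu, hux, hxu, hxx, neg_neg, two_smul]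
    abel
  cases s <;> cases t <;>
    simp only [if_true, if_false, Bool.true_eq_false, Bool.false_eq_true, key] <;>
    [rw [P4, h4]; rw [P3, smul_zero]; rw [P2, smul_zero]; rw [P1, h4]]

lemma kA_mul_neg (y z : kAlg k Q) : y * -z = -(y * z) := mul_neg y z

lemma kA_neg_mul (y z : kAlg k Q) : -y * z = -(y * z) := neg_mul y z

lemma kA_neg_zero : -(0 : kAlg k Q) = 0 := neg_zero

lemma kA_sub (y z : kAlg k Q) : y - z = y + -z := sub_eq_add_neg y z

lemma half_sum {A : Type} [Ring A] [Algebra k A] (hchar : (2 : k) ≠ 0) (u x : A) :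
    (2⁻¹ : k) • (u + x) + (2⁻¹ : k) • (u + -x) = u := by
  rw [← smul_add]
  have h : u + x + (u + -x) = (2 : k) • u := by rw [two_smul]; abel
  rw [h, smul_smul, inv_mul_cancel₀ hchar, one_smul]

lemma half_diff {A : Type} [Ring A] [Algebra k A] (hchar : (2 : k) ≠ 0) (u x : A) :
    (2⁻¹ : k) • (u + x) - (2⁻¹ : k) • (u + -x) = x := by
  rw [← smul_sub]
  have h : u + x - (u + -x) = (2 : k) • x := by rw [two_smul]; abel
  rw [h, smul_smul, inv_mul_cancel₀ hchar, one_smul]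

lemma half_rec_add {A : Type} [Ring A] [Algebra k A] (hchar : (2 : k) ≠ 0) (p q : A) :
    (2⁻¹ : k) • (p + q + (p - q)) = p := by
  have h : p + q + (p - q) = (2 : k) • p := by rw [two_smul]; abel
  rw [h, smul_smul, inv_mul_cancel₀ hchar, one_smul]

lemma half_rec_sub {A : Type} [Ring A] [Algebra k A] (hchar : (2 : k) ≠ 0) (p q : A) :
    (2⁻¹ : k) • (p + q + -(p - q)) = q := by
  have h : p + q + -(p - q) = (2 : k) • q := by rw [two_smul]; abel
  rw [h, smul_smul, inv_mul_cancel₀ hchar, one_smul]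

lemma orth_sub_sq {A : Type} [Ring A] (p q : A) (hp : p * p = p) (hq : q * q = q)
    (hpq : p * q = 0) (hqp : q * p = 0) : (p - q) * (p - q) = p + q := by
  rw [sub_mul, mul_sub, mul_sub, hp, hq, hpq, hqp]
  abel

lemma orth_add_mul_sub {A : Type} [Ring A] (p q : A) (hp : p * p = p) (hq : q * q = q)
    (hpq : p * q = 0) (hqp : q * p = 0) : (p + q) * (p - q) = p - q := by
  rw [add_mul, mul_sub, mul_sub, hp, hq, hpq, hqp]
  abel

lemma orth_sub_mul_add {A : Type} [Ring A] (p q : A) (hp : p * p = p) (hq : q * q = q)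
    (hpq : p * q = 0) (hqp : q * p = 0) : (p - q) * (p + q) = p - q := by
  rw [sub_mul, mul_add, mul_add, hp, hq, hpq, hqp]
  abel

/- support and multiplication of Gv -/

lemma choose_tgt (hQ : Q.SkewedGentle) {i : Q.V} (h : Q.specialAt i) :
    (Q.tgt h.choose).1 = i := by
  obtain ⟨hs, hf⟩ := h.choose_spec
  rw [← sg_loop hQ hs, hf]

lemma choose_src {i : Q.V} (h : Q.specialAt i) : (Q.src h.choose).1 = i := h.choose_spec.2

lemma eV_mul_Gv (hQ : Q.SkewedGentle) (j : Q.V) (v : Q.TV) :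
    eV (k := k) j * Gv v = if j = v.1.1 then Gv v else 0 := by
  obtain ⟨⟨i, σ⟩, h⟩ := v
  cases σ with
  | none =>
    simp only [Gv_none]
    rw [eV_mul]
    by_cases hij : j = i
    · subst hij; simp
    · simp [hij]
  | some b =>
    have ht : (Q.tgt (SOK_some h).choose).1 = i := choose_tgt hQ (SOK_some h)
    rw [Gv_some, mul_smul_comm, mul_add]
    by_cases hij : j = i
    · rw [if_pos hij]
      subst hij
      congr 1
      congr 1
      · rw [eV_mul, if_pos rfl]
      · cases b
        · rw [if_neg Bool.false_ne_true, kA_mul_neg, eV_mul_xA, if_pos ht.symm]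
        · rw [if_pos rfl, eV_mul_xA, if_pos ht.symm]
    · rw [if_neg hij, eV_mul, if_neg hij]
      cases b
      · rw [if_neg Bool.false_ne_true, kA_mul_neg, eV_mul_xA, ht, if_neg hij, kA_neg_zero,
          add_zero, smul_zero]
      · rw [if_pos rfl, eV_mul_xA, ht, if_neg hij, add_zero, smul_zero]

lemma Gv_mul_eV (hQ : Q.SkewedGentle) (v : Q.TV) (j : Q.V) :
    Gv (k := k) v * eV j = if v.1.1 = j then Gv v else 0 := by
  obtain ⟨⟨i, σ⟩, h⟩ := v
  cases σ with
  | none =>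
    simp only [Gv_none]
    rw [eV_mul]
  | some b =>
    have hs : (Q.src (SOK_some h).choose).1 = i := choose_src (SOK_some h)
    rw [Gv_some, smul_mul_assoc, add_mul]
    by_cases hij : i = j
    · rw [if_pos hij]
      subst hij
      congr 1
      congr 1
      · rw [eV_mul, if_pos rfl]
      · cases b
        · rw [if_neg Bool.false_ne_true, kA_neg_mul, xA_mul_eV, if_pos hs]
        · rw [if_pos rfl, xA_mul_eV, if_pos hs]
    · rw [if_neg hij, eV_mul, if_neg hij]
      cases b
      · rw [if_neg Bool.false_ne_true, kA_neg_mul, xA_mul_eV, hs, if_neg hij, kA_neg_zero,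
          add_zero, smul_zero]
      · rw [if_pos rfl, xA_mul_eV, hs, if_neg hij, add_zero, smul_zero]

lemma Gv_mul (hQ : Q.SkewedGentle) (hchar : (2 : k) ≠ 0) (v w : Q.TV) :
    Gv (k := k) v * Gv w = if v = w then Gv v else 0 := by
  obtain ⟨⟨i, σ⟩, h⟩ := v
  obtain ⟨⟨j, ρ⟩, h'⟩ := w
  by_cases hij : i = j
  · subst hij
    cases σ with
    | none =>
      cases ρ with
      | none => simp [eV_mul]; exact fun hc => absurd rfl hc
      | some c => exact absurd (SOK_some h') (SOK_none h)
    | some b =>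
      cases ρ with
      | none => exact absurd (SOK_some h) (SOK_none h')
      | some c =>
        have hgo := half_orth (hchar := hchar) (eV (k := k) i) (xA (SOK_some h).choose)
          (by simp [eV_mul])
          (by rw [eV_mul_xA, if_pos (choose_tgt hQ (SOK_some h)).symm])
          (by rw [xA_mul_eV, if_pos (choose_src (SOK_some h))])
          (by rw [xA_sq hQ (SOK_some h).choose_spec.1, choose_src (SOK_some h)]) b c
        rw [Gv_some, Gv_some, hgo]
        by_cases hbc : b = c
        · subst hbc; simp; exact fun hc => absurd rfl hc
        · rw [if_neg hbc, if_neg (fun he => hbc (by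
            have := congrArg (fun x : Q.TV => x.1.2) he
            simpa using this))]
  · rw [if_neg (fun he => hij (by
      have := congrArg (fun x : Q.TV => x.1.1) he
      simpa using this))]
    have hw : Gv (k := k) ⟨(j, ρ), h'⟩ = eV j * Gv ⟨(j, ρ), h'⟩ := by
      erw [eV_mul_Gv hQ, if_pos rfl]
    erw [hw, ← mul_assoc, Gv_mul_eV hQ, if_neg hij, zero_mul]

lemma sumSOK (hchar : (2 : k) ≠ 0) (i : Q.V) :
    (∑ σ : Option Bool, if h : Q.SOK i σ then Gv (k := k) ⟨(i, σ), h⟩ else 0) = eV i := by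
  rw [Fintype.sum_option, Fintype.sum_bool]
  by_cases hsp : Q.specialAt i
  · rw [dif_neg (fun hn => (SOK_none hn) hsp), dif_pos (SOK_some_iff.2 hsp),
      dif_pos (SOK_some_iff.2 hsp), zero_add, Gv_some, Gv_some, if_pos rfl,
      if_neg Bool.false_ne_true]
    exact half_sum hchar (eV i) (xA _)
  · rw [dif_pos (SOK_none_iff.2 hsp), dif_neg (fun hbad => hsp (SOK_some hbad)),
      dif_neg (fun hbad => hsp (SOK_some hbad)), add_zero, add_zero, Gv_none]
/- the sums of idempotents in kAlgT -/

noncomputable def Pv (i : Q.V) : kAlgT k Q :=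
  ∑ σ : Option Bool, if h : Q.SOK i σ then eT ⟨(i, σ), h⟩ else 0

lemma Pv_def (i : Q.V) :
    Pv (k := k) i = ∑ σ : Option Bool, if h : Q.SOK i σ then eT ⟨(i, σ), h⟩ else 0 := rfl

lemma Pv_special {i : Q.V} (hsp : Q.specialAt i) :
    Pv (k := k) i = eT ⟨(i, some true), Or.inl ⟨hsp, Or.inl rfl⟩⟩ +
      eT ⟨(i, some false), Or.inl ⟨hsp, Or.inr rfl⟩⟩ := by
  rw [Pv_def, Fintype.sum_option, Fintype.sum_bool, dif_neg (fun hn => SOK_none hn hsp),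
    dif_pos (SOK_some_iff.2 hsp), dif_pos (SOK_some_iff.2 hsp), zero_add]

lemma Pv_ordinary {i : Q.V} (h : ¬ Q.specialAt i) :
    Pv (k := k) i = eT ⟨(i, none), Or.inr ⟨h, rfl⟩⟩ := by
  rw [Pv_def, Fintype.sum_option, Fintype.sum_bool, dif_pos (SOK_none_iff.2 h),
    dif_neg (fun hb => h (SOK_some hb)), dif_neg (fun hb => h (SOK_some hb)), add_zero,
    add_zero]

lemma eT_mul_Pv' (i : Q.V) (σ : Option Bool) (h : Q.SOK i σ) (j : Q.V) :
    eT (k := k) ⟨(i, σ), h⟩ * Pv j = if i = j then eT ⟨(i, σ), h⟩ else 0 := by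
  rw [Pv_def, Finset.mul_sum]
  by_cases hij : i = j
  · subst hij
    rw [if_pos rfl, Fintype.sum_option, Fintype.sum_bool]
    cases σ with
    | none =>
      erw [dif_pos h, dif_neg (fun hb => SOK_none h (SOK_some hb)),
        dif_neg (fun hb => SOK_none h (SOK_some hb)), mul_zero, add_zero, add_zero,
        eT_mul, if_pos rfl]
    | some b =>
      erw [dif_neg (fun hn => SOK_none hn (SOK_some h)), dif_pos (SOK_some_iff.2 (SOK_some h)),
        dif_pos (SOK_some_iff.2 (SOK_some h)), mul_zero, zero_add, eT_mul, eT_mul]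
      cases b
      · rw [if_neg (fun he => by simpa using congrArg (fun x : Q.TV => x.1.2) he),
          if_pos (by rfl), zero_add]
      · rw [if_pos (by rfl), if_neg (fun he => by
          simpa using congrArg (fun x : Q.TV => x.1.2) he), add_zero]
  · rw [if_neg hij]
    apply Finset.sum_eq_zero
    intro σ' _
    by_cases hσ : Q.SOK j σ'
    · erw [dif_pos hσ, eT_mul,
        if_neg (fun he => hij (congrArg (fun x : Q.TV => x.1.1) he))]
    · rw [dif_neg hσ, mul_zero]

lemma Pv_mul_Pv (i j : Q.V) : Pv (k := k) i * Pv j = if i = j then Pv i else 0 := by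
  by_cases hij : i = j
  · subst hij
    rw [if_pos rfl]
    nth_rewrite 1 [Pv_def]
    rw [Finset.sum_mul]
    nth_rewrite 2 [Pv_def]
    refine Finset.sum_congr rfl fun σ _ => ?_
    by_cases hσ : Q.SOK i σ
    · rw [dif_pos hσ, eT_mul_Pv', if_pos rfl]
    · rw [dif_neg hσ, zero_mul]
  · rw [if_neg hij, Pv_def, Finset.sum_mul]
    apply Finset.sum_eq_zero
    intro σ _
    by_cases hσ : Q.SOK i σ
    · rw [dif_pos hσ, eT_mul_Pv', if_neg hij]
    · rw [dif_neg hσ, zero_mul]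

lemma Pv_mul_yT (j : Q.V) (t : Q.TA) :
    Pv (k := k) j * yT t = if j = (Q.tgt t.1.1).1 then yT t else 0 := by
  rw [Pv_def, Finset.sum_mul]
  by_cases hj : j = (Q.tgt t.1.1).1
  · rw [if_pos hj]
    subst hj
    rw [Finset.sum_eq_single t.1.2.1]
    · erw [dif_pos t.2.2.1, eT_mul_yT, if_pos rfl]
    · intro σ _ hne
      by_cases hσ : Q.SOK (Q.tgt t.1.1).1 σ
      · erw [dif_pos hσ, eT_mul_yT, if_neg (fun he => hne (congrArg Prod.snd he))]
      · rw [dif_neg hσ, zero_mul]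
    · intro hmem
      exact absurd (Finset.mem_univ _) hmem
  · rw [if_neg hj]
    apply Finset.sum_eq_zero
    intro σ _
    by_cases hσ : Q.SOK j σ
    · erw [dif_pos hσ, eT_mul_yT, if_neg (fun he => hj (congrArg Prod.fst he))]
    · rw [dif_neg hσ, zero_mul]

lemma yT_mul_Pv (t : Q.TA) (j : Q.V) :
    yT (k := k) t * Pv j = if (Q.src t.1.1).1 = j then yT t else 0 := by
  rw [Pv_def, Finset.mul_sum]
  by_cases hj : (Q.src t.1.1).1 = j
  · rw [if_pos hj]
    subst hj
    rw [Finset.sum_eq_single t.1.2.2]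
    · erw [dif_pos t.2.2.2, yT_mul_eT, if_pos rfl]
    · intro σ _ hne
      by_cases hσ : Q.SOK (Q.src t.1.1).1 σ
      · erw [dif_pos hσ, yT_mul_eT, if_neg (fun he => hne (congrArg Prod.snd he).symm)]
      · rw [dif_neg hσ, mul_zero]
    · intro hmem
      exact absurd (Finset.mem_univ _) hmem
  · rw [if_neg hj]
    apply Finset.sum_eq_zero
    intro σ _
    by_cases hσ : Q.SOK j σ
    · erw [dif_pos hσ, yT_mul_eT, if_neg (fun he => hj (by exact congrArg Prod.fst he))]
    · rw [dif_neg hσ, mul_zero]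

lemma yT_mul_yT_ne (t s : Q.TA)
    (h : ((Q.src t.1.1).1, t.1.2.2) ≠ ((Q.tgt s.1.1).1, s.1.2.1)) :
    yT (k := k) t * yT s = 0 := by
  erw [← mul_eT_src t, ← eT_tgt_mul s, mul_assoc, ← mul_assoc (eT _), eT_mul,
    if_neg (fun he => h (congrArg Subtype.val he)), zero_mul, mul_zero]

lemma sumPv : (∑ i : Q.V, Pv (k := k) i) = 1 := by
  rw [← sum_eT (k := k) (Q := Q), Fintype.sum_prod_type]
  rfl
/- the map Phi : kQ → kQtilde -/

noncomputable def PhiG : GenQ Q → kAlgT k Q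
  | Sum.inl i => Pv i
  | Sum.inr a =>
    if ha : Q.special a then
      eT ⟨((Q.src a).1, some true), Or.inl ⟨⟨a, ha, rfl⟩, Or.inl rfl⟩⟩ -
      eT ⟨((Q.src a).1, some false), Or.inl ⟨⟨a, ha, rfl⟩, Or.inr rfl⟩⟩
    else
      ∑ τ : Option Bool, ∑ σ : Option Bool,
        if h : Q.SOK (Q.tgt a).1 τ ∧ Q.SOK (Q.src a).1 σ then
          yT ⟨(a, τ, σ), ha, h.1, h.2⟩ else 0

lemma PhiG_inl (i : Q.V) : PhiG (k := k) (Q := Q) (Sum.inl i) = Pv i := rfl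

lemma PhiG_inr (a : Q.A) : PhiG (k := k) (Q := Q) (Sum.inr a) =
    if ha : Q.special a then
      eT ⟨((Q.src a).1, some true), Or.inl ⟨⟨a, ha, rfl⟩, Or.inl rfl⟩⟩ -
      eT ⟨((Q.src a).1, some false), Or.inl ⟨⟨a, ha, rfl⟩, Or.inr rfl⟩⟩
    else
      ∑ τ : Option Bool, ∑ σ : Option Bool,
        if h : Q.SOK (Q.tgt a).1 τ ∧ Q.SOK (Q.src a).1 σ then
          yT ⟨(a, τ, σ), ha, h.1, h.2⟩ else 0 := rfl

/- idempotent facts at a special vertex -/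

lemma eTp_sq {a : Q.A} (ha : Q.special a) :
    eT (k := k) ⟨((Q.src a).1, some true), Or.inl ⟨⟨a, ha, rfl⟩, Or.inl rfl⟩⟩ *
      eT ⟨((Q.src a).1, some true), Or.inl ⟨⟨a, ha, rfl⟩, Or.inl rfl⟩⟩ =
    eT ⟨((Q.src a).1, some true), Or.inl ⟨⟨a, ha, rfl⟩, Or.inl rfl⟩⟩ := by
  erw [eT_mul, if_pos rfl]

lemma eTm_sq {a : Q.A} (ha : Q.special a) :
    eT (k := k) ⟨((Q.src a).1, some false), Or.inl ⟨⟨a, ha, rfl⟩, Or.inr rfl⟩⟩ *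
      eT ⟨((Q.src a).1, some false), Or.inl ⟨⟨a, ha, rfl⟩, Or.inr rfl⟩⟩ =
    eT ⟨((Q.src a).1, some false), Or.inl ⟨⟨a, ha, rfl⟩, Or.inr rfl⟩⟩ := by
  erw [eT_mul, if_pos rfl]

lemma eTpm {a : Q.A} (ha : Q.special a) :
    eT (k := k) ⟨((Q.src a).1, some true), Or.inl ⟨⟨a, ha, rfl⟩, Or.inl rfl⟩⟩ *
      eT ⟨((Q.src a).1, some false), Or.inl ⟨⟨a, ha, rfl⟩, Or.inr rfl⟩⟩ = 0 := by
  erw [eT_mul, if_neg (fun he => by simpa using congrArg (fun x : Q.TV => x.1.2) he)]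

lemma eTmp {a : Q.A} (ha : Q.special a) :
    eT (k := k) ⟨((Q.src a).1, some false), Or.inl ⟨⟨a, ha, rfl⟩, Or.inr rfl⟩⟩ *
      eT ⟨((Q.src a).1, some true), Or.inl ⟨⟨a, ha, rfl⟩, Or.inl rfl⟩⟩ = 0 := by
  erw [eT_mul, if_neg (fun he => by simpa using congrArg (fun x : Q.TV => x.1.2) he)]

noncomputable def PhiF : FreeAlgebra k (GenQ Q) →ₐ[k] kAlgT k Q :=
  FreeAlgebra.lift k (PhiG (k := k) (Q := Q))

lemma PhiF_inl (i : Q.V) : PhiF (k := k) (FreeAlgebra.ι k (Sum.inl i)) = Pv i :=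
  FreeAlgebra.lift_ι_apply _ _

lemma PhiF_inr (a : Q.A) :
    PhiF (k := k) (FreeAlgebra.ι k (Sum.inr a)) = PhiG (k := k) (Sum.inr a) :=
  FreeAlgebra.lift_ι_apply _ _

lemma PhiF_zrel {a b : Q.A} (ha : ¬ Q.special a) (hb : ¬ Q.special b)
    (hab : Q.src a = Q.tgt b) :
    PhiG (k := k) (Sum.inr a) * PhiG (k := k) (Sum.inr b) = 0 := by
  rw [PhiG_inr, PhiG_inr, dif_neg ha, dif_neg hb, Finset.sum_mul]
  apply Finset.sum_eq_zero
  intro τ _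
  rw [Finset.sum_mul]
  have step : ∀ σ : Option Bool,
      (if h : Q.SOK (Q.tgt a).1 τ ∧ Q.SOK (Q.src a).1 σ then
        yT (k := k) ⟨(a, τ, σ), ha, h.1, h.2⟩ else 0) *
      (∑ τ' : Option Bool, ∑ ρ : Option Bool,
        if h : Q.SOK (Q.tgt b).1 τ' ∧ Q.SOK (Q.src b).1 ρ then
          yT ⟨(b, τ', ρ), hb, h.1, h.2⟩ else 0) =
      ∑ ρ : Option Bool,
      (if h : Q.SOK (Q.tgt a).1 τ ∧ Q.SOK (Q.src a).1 σ then
        yT (k := k) ⟨(a, τ, σ), ha, h.1, h.2⟩ else 0) *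
      (if h : Q.SOK (Q.tgt b).1 σ ∧ Q.SOK (Q.src b).1 ρ then
          yT ⟨(b, σ, ρ), hb, h.1, h.2⟩ else 0) := by
    intro σ
    rw [Finset.mul_sum, Finset.sum_eq_single σ]
    · rw [Finset.mul_sum]
    · intro τ' _ hne
      rw [Finset.mul_sum]
      apply Finset.sum_eq_zero
      intro ρ _
      by_cases h1 : Q.SOK (Q.tgt a).1 τ ∧ Q.SOK (Q.src a).1 σ
      · by_cases h2 : Q.SOK (Q.tgt b).1 τ' ∧ Q.SOK (Q.src b).1 ρ
        · rw [dif_pos h1, dif_pos h2]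
          exact yT_mul_yT_ne _ _ (fun he => hne (by exact (congrArg Prod.snd he).symm))
        · rw [dif_neg h2, mul_zero]
      · rw [dif_neg h1, zero_mul]
    · intro hmem
      exact absurd (Finset.mem_univ _) hmem
  rw [Finset.sum_congr rfl fun σ _ => step σ, Finset.sum_comm]
  apply Finset.sum_eq_zero
  intro ρ _
  by_cases hτ : Q.SOK (Q.tgt a).1 τ
  · by_cases hρ : Q.SOK (Q.src b).1 ρ
    · refine Eq.trans (Finset.sum_congr rfl fun σ _ => ?_)
        (yT_rtilde (k := k) a b ha hb hab τ hτ ρ hρ)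
      by_cases hσ : Q.SOK (Q.tgt b).1 σ
      · have hσ' : Q.SOK (Q.src a).1 σ := by
          rw [show (Q.src a).1 = (Q.tgt b).1 from congrArg Prod.fst hab]
          exact hσ
        rw [dif_pos (⟨hτ, hσ'⟩ : _ ∧ _), dif_pos (⟨hσ, hρ⟩ : _ ∧ _), dif_pos hσ]
      · have hσ' : ¬ Q.SOK (Q.src a).1 σ := fun hc => hσ (by
          rw [← show (Q.src a).1 = (Q.tgt b).1 from congrArg Prod.fst hab]
          exact hc)
        rw [dif_neg (show ¬(Q.SOK (Q.tgt a).1 τ ∧ Q.SOK (Q.src a).1 σ) from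
            fun hc => hσ' hc.2), dif_neg hσ, zero_mul]
    · apply Finset.sum_eq_zero
      intro σ _
      by_cases hF : Q.SOK (Q.tgt a).1 τ ∧ Q.SOK (Q.src a).1 σ
      · rw [dif_pos hF, dif_neg (show ¬(Q.SOK (Q.tgt b).1 σ ∧ Q.SOK (Q.src b).1 ρ) from
            fun hc => hρ hc.2), mul_zero]
      · rw [dif_neg hF, zero_mul]
  · apply Finset.sum_eq_zero
    intro σ _
    rw [dif_neg (show ¬(Q.SOK (Q.tgt a).1 τ ∧ Q.SOK (Q.src a).1 σ) from
        fun hc => hτ hc.1), zero_mul]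

lemma PhiF_rel (hQ : Q.SkewedGentle) :
    ∀ ⦃x y⦄, PARel k Q x y → PhiF (k := k) x = PhiF y := by
  intro x y h
  induction h with
  | ee i j =>
    rw [map_mul, PhiF_inl, PhiF_inl, Pv_mul_Pv, apply_ite (PhiF (k := k)), map_zero, PhiF_inl]
  | et a =>
    rw [map_mul, PhiF_inl, PhiF_inr]
    by_cases ha : Q.special a
    · rw [PhiG_inr, dif_pos ha, show (Q.tgt a).1 = (Q.src a).1 from (sg_loop hQ ha).symm,
        Pv_special ⟨a, ha, rfl⟩]
      exact orth_add_mul_sub _ _ (eTp_sq ha) (eTm_sq ha) (eTpm ha) (eTmp ha)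
    · rw [PhiG_inr, dif_neg ha, Finset.mul_sum]
      refine Finset.sum_congr rfl fun τ _ => ?_
      rw [Finset.mul_sum]
      refine Finset.sum_congr rfl fun σ _ => ?_
      by_cases h : Q.SOK (Q.tgt a).1 τ ∧ Q.SOK (Q.src a).1 σ
      · erw [dif_pos h, Pv_mul_yT, if_pos rfl]
      · rw [dif_neg h, mul_zero]
  | es a =>
    rw [map_mul, PhiF_inl, PhiF_inr]
    by_cases ha : Q.special a
    · rw [PhiG_inr, dif_pos ha, Pv_special ⟨a, ha, rfl⟩]
      exact orth_sub_mul_add _ _ (eTp_sq ha) (eTm_sq ha) (eTpm ha) (eTmp ha)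
    · rw [PhiG_inr, dif_neg ha, Finset.sum_mul]
      refine Finset.sum_congr rfl fun τ _ => ?_
      rw [Finset.sum_mul]
      refine Finset.sum_congr rfl fun σ _ => ?_
      by_cases h : Q.SOK (Q.tgt a).1 τ ∧ Q.SOK (Q.src a).1 σ
      · erw [dif_pos h, yT_mul_Pv, if_pos rfl]
      · rw [dif_neg h, zero_mul]
  | one =>
    rw [map_sum, map_one]
    rw [Finset.sum_congr rfl fun i _ => PhiF_inl (k := k) i]
    exact sumPv
  | zrel a b ha hb hab =>
    rw [map_mul, map_zero, PhiF_inr, PhiF_inr]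
    exact PhiF_zrel ha hb hab
  | srel e he =>
    rw [sg_dual_eq hQ he, map_mul, PhiF_inr, PhiF_inl, PhiG_inr, dif_pos he,
      Pv_special ⟨e, he, rfl⟩]
    exact orth_sub_sq _ _ (eTp_sq he) (eTm_sq he) (eTpm he) (eTmp he)
/- the map Psi : kQtilde → kQ -/

noncomputable def PsiG : GenT Q → kAlg k Q
  | Sum.inl v => Gv v
  | Sum.inr t => Gv ⟨((Q.tgt t.1.1).1, t.1.2.1), t.2.2.1⟩ *
      (xA t.1.1 * Gv ⟨((Q.src t.1.1).1, t.1.2.2), t.2.2.2⟩)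

lemma PsiG_inl (v : Q.TV) : PsiG (k := k) (Sum.inl v) = Gv v := rfl

lemma PsiG_inr (t : Q.TA) : PsiG (k := k) (Sum.inr t) =
    Gv ⟨((Q.tgt t.1.1).1, t.1.2.1), t.2.2.1⟩ *
      (xA t.1.1 * Gv ⟨((Q.src t.1.1).1, t.1.2.2), t.2.2.2⟩) := rfl

noncomputable def PsiF : FreeAlgebra k (GenT Q) →ₐ[k] kAlg k Q :=
  FreeAlgebra.lift k (PsiG (k := k) (Q := Q))

lemma PsiF_inl (v : Q.TV) : PsiF (k := k) (FreeAlgebra.ι k (Sum.inl v)) = Gv v :=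
  FreeAlgebra.lift_ι_apply _ _

lemma PsiF_inr (t : Q.TA) :
    PsiF (k := k) (FreeAlgebra.ι k (Sum.inr t)) = PsiG (k := k) (Sum.inr t) :=
  FreeAlgebra.lift_ι_apply _ _

lemma PsiF_rel (hQ : Q.SkewedGentle) (hchar : (2 : k) ≠ 0) :
    ∀ ⦃x y⦄, PARelT k Q x y → PsiF (k := k) x = PsiF y := by
  intro x y h
  induction h with
  | ee v w =>
    rw [map_mul, PsiF_inl, PsiF_inl, Gv_mul hQ hchar, apply_ite (PsiF (k := k)), map_zero,
      PsiF_inl]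
  | et t =>
    erw [map_mul, PsiF_inl, PsiF_inr, PsiG_inr, ← mul_assoc, Gv_mul hQ hchar, if_pos rfl]
  | es t =>
    erw [map_mul, PsiF_inl, PsiF_inr, PsiG_inr, mul_assoc, mul_assoc, Gv_mul hQ hchar,
      if_pos rfl]
  | one =>
    rw [map_sum, map_one]
    rw [Finset.sum_congr rfl fun p _ => show PsiF (k := k)
        (if h : Q.SOK p.1 p.2 then FreeAlgebra.ι k (Sum.inl ⟨p, h⟩) else 0) =
        (if h : Q.SOK p.1 p.2 then Gv ⟨p, h⟩ else 0) from by
      by_cases h : Q.SOK p.1 p.2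
      · erw [dif_pos h, dif_pos h, PsiF_inl]
      · rw [dif_neg h, dif_neg h, map_zero]]
    rw [Fintype.sum_prod_type]
    rw [Finset.sum_congr rfl fun i _ => sumSOK (k := k) hchar i]
    exact sum_eV
  | rtilde a b ha hb hab τ hτ ρ hρ =>
    rw [map_sum, map_zero]
    have h1 : (Q.src a).1 = (Q.tgt b).1 := congrArg Prod.fst hab
    have step : ∀ σ : Option Bool,
        PsiF (k := k) (if h : Q.SOK (Q.tgt b).1 σ then
          FreeAlgebra.ι k (Sum.inr ⟨(a, τ, σ), ha, hτ, by rw [h1]; exact h⟩) *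
          FreeAlgebra.ι k (Sum.inr ⟨(b, σ, ρ), hb, h, hρ⟩) else 0) =
        (Gv ⟨((Q.tgt a).1, τ), hτ⟩ * xA a) *
          ((if h : Q.SOK (Q.tgt b).1 σ then Gv ⟨((Q.tgt b).1, σ), h⟩ else 0) *
            (xA b * Gv ⟨((Q.src b).1, ρ), hρ⟩)) := by
      intro σ
      by_cases h : Q.SOK (Q.tgt b).1 σ
      · erw [dif_pos h, dif_pos h, map_mul, PsiF_inr, PsiF_inr, PsiG_inr, PsiG_inr]
        have hvv : (⟨((Q.src a).1, σ), by rw [h1]; exact h⟩ : Q.TV) =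
            ⟨((Q.tgt b).1, σ), h⟩ := Subtype.ext (congrArg (fun v => (v, σ)) h1)
        have hGv : Gv (k := k) ⟨((Q.src a).1, σ), by rw [h1]; exact h⟩ =
            Gv ⟨((Q.tgt b).1, σ), h⟩ := congrArg Gv hvv
        show Gv ⟨((Q.tgt a).1, τ), hτ⟩ * (xA a * Gv ⟨((Q.src a).1, σ), _⟩) *
            (Gv ⟨((Q.tgt b).1, σ), h⟩ * (xA b * Gv ⟨((Q.src b).1, ρ), hρ⟩)) = _
        erw [hGv, ← mul_assoc (Gv ⟨((Q.tgt a).1, τ), hτ⟩),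
          mul_assoc _ (Gv ⟨((Q.tgt b).1, σ), h⟩), ← mul_assoc (Gv ⟨((Q.tgt b).1, σ), h⟩),
          Gv_mul hQ hchar, if_pos rfl]
      · rw [dif_neg h, dif_neg h, map_zero, zero_mul, mul_zero]
    rw [Finset.sum_congr rfl fun σ _ => step σ, ← Finset.mul_sum, ← Finset.sum_mul,
      sumSOK hchar, ← mul_assoc (eV (Q.tgt b).1), eV_mul_xA, if_pos rfl,
      mul_assoc (Gv ⟨((Q.tgt a).1, τ), hτ⟩), ← mul_assoc (xA a), xA_zrel ha hb hab,
      zero_mul, mul_zero]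
/- the algebra homomorphisms on the quotients -/

noncomputable def PhiA (hQ : Q.SkewedGentle) : kAlg k Q →ₐ[k] kAlgT k Q :=
  RingQuot.liftAlgHom k ⟨PhiF, PhiF_rel hQ⟩

noncomputable def PsiA (hQ : Q.SkewedGentle) (hchar : (2 : k) ≠ 0) :
    kAlgT k Q →ₐ[k] kAlg k Q :=
  RingQuot.liftAlgHom k ⟨PsiF, PsiF_rel hQ hchar⟩

lemma PhiA_mk (hQ : Q.SkewedGentle) (x : FreeAlgebra k (GenQ Q)) :
    PhiA (k := k) hQ (RingQuot.mkAlgHom k (PARel k Q) x) = PhiF x :=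
  RingQuot.liftAlgHom_mkAlgHom_apply _ _ _ _

lemma PsiA_mk (hQ : Q.SkewedGentle) (hchar : (2 : k) ≠ 0) (x : FreeAlgebra k (GenT Q)) :
    PsiA (k := k) hQ hchar (RingQuot.mkAlgHom k (PARelT k Q) x) = PsiF x :=
  RingQuot.liftAlgHom_mkAlgHom_apply _ _ _ _

lemma PhiA_eV (hQ : Q.SkewedGentle) (i : Q.V) : PhiA (k := k) hQ (eV i) = Pv i :=
  (PhiA_mk hQ _).trans (PhiF_inl i)

lemma PhiA_xA (hQ : Q.SkewedGentle) (a : Q.A) :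
    PhiA (k := k) hQ (xA a) = PhiG (k := k) (Sum.inr a) :=
  (PhiA_mk hQ _).trans (PhiF_inr a)

lemma PsiA_eT (hQ : Q.SkewedGentle) (hchar : (2 : k) ≠ 0) (v : Q.TV) :
    PsiA (k := k) hQ hchar (eT v) = Gv v :=
  (PsiA_mk hQ hchar _).trans (PsiF_inl v)

lemma PsiA_yT (hQ : Q.SkewedGentle) (hchar : (2 : k) ≠ 0) (t : Q.TA) :
    PsiA (k := k) hQ hchar (yT t) = PsiG (k := k) (Sum.inr t) :=
  (PsiA_mk hQ hchar _).trans (PsiF_inr t)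

/- Phi of the idempotents Gv -/

lemma PhiA_Gv (hQ : Q.SkewedGentle) (hchar : (2 : k) ≠ 0) (v : Q.TV) :
    PhiA (k := k) hQ (Gv v) = eT v := by
  obtain ⟨⟨i, σ⟩, h⟩ := v
  cases σ with
  | none => rw [Gv_none, PhiA_eV, Pv_ordinary (SOK_none h)]
  | some b =>
    have hsp := SOK_some h
    have hε := hsp.choose_spec
    have hv : (Q.src hsp.choose).1 = i := hε.2
    have hp : eT (k := k) ⟨((Q.src hsp.choose).1, some true),
        Or.inl ⟨⟨hsp.choose, hε.1, rfl⟩, Or.inl rfl⟩⟩ =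
        eT ⟨(i, some true), Or.inl ⟨hsp, Or.inl rfl⟩⟩ :=
      congrArg eT (Subtype.ext (congrArg (fun v => (v, some true)) hv))
    have hm : eT (k := k) ⟨((Q.src hsp.choose).1, some false),
        Or.inl ⟨⟨hsp.choose, hε.1, rfl⟩, Or.inr rfl⟩⟩ =
        eT ⟨(i, some false), Or.inl ⟨hsp, Or.inr rfl⟩⟩ :=
      congrArg eT (Subtype.ext (congrArg (fun v => (v, some false)) hv))
    rw [Gv_some, map_smul, map_add, PhiA_eV, Pv_special hsp]
    cases b
    · rw [if_neg Bool.false_ne_true, map_neg, PhiA_xA, PhiG_inr, dif_pos hε.1, hp, hm]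
      exact half_rec_sub hchar _ _
    · rw [if_pos rfl, PhiA_xA, PhiG_inr, dif_pos hε.1, hp, hm]
      exact half_rec_add hchar _ _

/- the sandwich computation -/

lemma eT_sandwich (t : Q.TA) :
    eT (k := k) ⟨((Q.tgt t.1.1).1, t.1.2.1), t.2.2.1⟩ *
      (PhiG (k := k) (Sum.inr t.1.1) * eT ⟨((Q.src t.1.1).1, t.1.2.2), t.2.2.2⟩) = yT t := by
  obtain ⟨⟨a, τ, σ⟩, ha, hτ, hσ⟩ := t
  show eT ⟨((Q.tgt a).1, τ), hτ⟩ * (PhiG (Sum.inr a) * eT ⟨((Q.src a).1, σ), hσ⟩) = _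
  rw [PhiG_inr, dif_neg ha]
  have inner : (∑ τ' : Option Bool, ∑ σ' : Option Bool,
      if h : Q.SOK (Q.tgt a).1 τ' ∧ Q.SOK (Q.src a).1 σ' then
        yT (k := k) ⟨(a, τ', σ'), ha, h.1, h.2⟩ else 0) * eT ⟨((Q.src a).1, σ), hσ⟩ =
      ∑ τ' : Option Bool, if h : Q.SOK (Q.tgt a).1 τ' then
        yT ⟨(a, τ', σ), ha, h, hσ⟩ else 0 := by
    rw [Finset.sum_mul]
    refine Finset.sum_congr rfl fun τ' _ => ?_
    rw [Finset.sum_mul, Finset.sum_eq_single σ]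
    · by_cases hτ' : Q.SOK (Q.tgt a).1 τ'
      · erw [dif_pos (⟨hτ', hσ⟩ : _ ∧ _), dif_pos hτ', yT_mul_eT, if_pos rfl]
      · rw [dif_neg (show ¬(Q.SOK (Q.tgt a).1 τ' ∧ Q.SOK (Q.src a).1 σ) from
          fun hc => hτ' hc.1), dif_neg hτ', zero_mul]
    · intro σ' _ hne
      by_cases hc : Q.SOK (Q.tgt a).1 τ' ∧ Q.SOK (Q.src a).1 σ'
      · erw [dif_pos hc, yT_mul_eT, if_neg (fun he => hne (by exact congrArg Prod.snd he))]
      · rw [dif_neg hc, zero_mul]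
    · intro hmem
      exact absurd (Finset.mem_univ _) hmem
  rw [inner, Finset.mul_sum, Finset.sum_eq_single τ]
  · erw [dif_pos hτ, eT_mul_yT, if_pos rfl]
  · intro τ' _ hne
    by_cases hτ' : Q.SOK (Q.tgt a).1 τ'
    · erw [dif_pos hτ', eT_mul_yT,
        if_neg (fun he => hne (by exact (congrArg Prod.snd he).symm))]
    · rw [dif_neg hτ', mul_zero]
  · intro hmem
    exact absurd (Finset.mem_univ _) hmem

/- the compositions are the identity -/

lemma comp1 (hQ : Q.SkewedGentle) (hchar : (2 : k) ≠ 0) :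
    (PhiA (k := k) hQ).comp (PsiA hQ hchar) = AlgHom.id k (kAlgT k Q) := by
  apply RingQuot.ringQuot_ext'
  apply FreeAlgebra.hom_ext
  funext g
  show PhiA (k := k) hQ (PsiA hQ hchar
    (RingQuot.mkAlgHom k (PARelT k Q) (FreeAlgebra.ι k g))) =
    RingQuot.mkAlgHom k (PARelT k Q) (FreeAlgebra.ι k g)
  cases g with
  | inl v =>
    rw [show RingQuot.mkAlgHom k (PARelT k Q) (FreeAlgebra.ι k (Sum.inl v)) = eT v from rfl,
      PsiA_eT, PhiA_Gv hQ hchar]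
  | inr t =>
    erw [show RingQuot.mkAlgHom k (PARelT k Q) (FreeAlgebra.ι k (Sum.inr t)) = yT t from rfl,
      PsiA_yT, PsiG_inr, map_mul, map_mul, PhiA_Gv hQ hchar, PhiA_Gv hQ hchar, PhiA_xA,
      eT_sandwich]

lemma comp2 (hQ : Q.SkewedGentle) (hchar : (2 : k) ≠ 0) :
    (PsiA (k := k) hQ hchar).comp (PhiA hQ) = AlgHom.id k (kAlg k Q) := by
  apply RingQuot.ringQuot_ext'
  apply FreeAlgebra.hom_ext
  funext g
  show PsiA (k := k) hQ hchar (PhiA hQ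
    (RingQuot.mkAlgHom k (PARel k Q) (FreeAlgebra.ι k g))) =
    RingQuot.mkAlgHom k (PARel k Q) (FreeAlgebra.ι k g)
  cases g with
  | inl i =>
    rw [show RingQuot.mkAlgHom k (PARel k Q) (FreeAlgebra.ι k (Sum.inl i)) = eV i from rfl,
      PhiA_eV, Pv_def, map_sum]
    rw [Finset.sum_congr rfl fun σ _ => show PsiA (k := k) hQ hchar
        (if h : Q.SOK i σ then eT ⟨(i, σ), h⟩ else 0) =
        (if h : Q.SOK i σ then Gv ⟨(i, σ), h⟩ else 0) from by
      by_cases h : Q.SOK i σ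
      · erw [dif_pos h, dif_pos h, PsiA_eT]
      · rw [dif_neg h, dif_neg h, map_zero]]
    exact sumSOK hchar i
  | inr a =>
    rw [show RingQuot.mkAlgHom k (PARel k Q) (FreeAlgebra.ι k (Sum.inr a)) = xA a from rfl,
      PhiA_xA, PhiG_inr]
    by_cases ha : Q.special a
    · erw [dif_pos ha, map_sub, PsiA_eT, PsiA_eT, Gv_some, Gv_some, if_pos rfl,
        if_neg Bool.false_ne_true]
      have hch : ∀ h : Q.specialAt (Q.src a).1, h.choose = a :=
        fun h => sg_choose_eq hQ h ha rfl
      simp only [hch]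
      exact half_diff hchar _ _
    · rw [dif_neg ha, map_sum]
      rw [Finset.sum_congr rfl fun τ _ => map_sum (PsiA (k := k) hQ hchar) _ _]
      rw [Finset.sum_congr rfl fun τ _ => Finset.sum_congr rfl fun σ _ =>
        show PsiA (k := k) hQ hchar (if h : Q.SOK (Q.tgt a).1 τ ∧ Q.SOK (Q.src a).1 σ then
            yT ⟨(a, τ, σ), ha, h.1, h.2⟩ else 0) =
          (if h : Q.SOK (Q.tgt a).1 τ then Gv ⟨((Q.tgt a).1, τ), h⟩ else 0) *
            (xA a * (if h : Q.SOK (Q.src a).1 σ then Gv ⟨((Q.src a).1, σ), h⟩ else 0)) from by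
        by_cases hτ : Q.SOK (Q.tgt a).1 τ
        · by_cases hσ : Q.SOK (Q.src a).1 σ
          · erw [dif_pos (⟨hτ, hσ⟩ : _ ∧ _), dif_pos hτ, dif_pos hσ, PsiA_yT, PsiG_inr]
          · rw [dif_neg (show ¬(Q.SOK (Q.tgt a).1 τ ∧ Q.SOK (Q.src a).1 σ) from
              fun hc => hσ hc.2), dif_neg hσ, map_zero, mul_zero, mul_zero]
        · rw [dif_neg (show ¬(Q.SOK (Q.tgt a).1 τ ∧ Q.SOK (Q.src a).1 σ) from
            fun hc => hτ hc.1), dif_neg hτ, map_zero, zero_mul]]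
      rw [Finset.sum_congr rfl fun τ _ => (Finset.mul_sum _ _ _).symm]
      rw [Finset.sum_congr rfl fun τ _ => congrArg _ (Finset.mul_sum _ _ _).symm]
      rw [← Finset.sum_mul, sumSOK hchar, sumSOK hchar, mul_eV_src, eV_tgt_mul]
end Aux

/-- **The isomorphism `φ_Q : kQ → kQ̃/⟨R̃⟩`.**  Let `Q` be a skewed-gentle polarized
quiver and `k` a field with `char k ≠ 2`.  The map determined by
`e_i ↦ Σ_{σ∈S(i)} e_{(i,σ)}`, `α ↦ Σ_{τ,σ} _τα_σ` for ordinary arrows, and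
`ε_i ↦ e_{(i,+)} - e_{(i,-)}` for special loops, is a `k`-algebra isomorphism whose
inverse satisfies `φ_Q⁻¹(e_{(i,±)}) = (1/2)(e_i ± ε_i)`. -/
theorem statement_18 (Q : PolQuiv) [Fintype Q.V] [Fintype Q.A]
    (hQ : Q.SkewedGentle) (hchar : (2 : k) ≠ 0) :
    ∃ φ : kAlg k Q ≃ₐ[k] kAlgT k Q,
      -- values on the trivial paths at ordinary vertices
      (∀ i : Q.V, ∀ h : ¬ Q.specialAt i,
        φ (RingQuot.mkAlgHom k (PARel k Q) (FreeAlgebra.ι k (Sum.inl i))) =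
          RingQuot.mkAlgHom k (PARelT k Q)
            (FreeAlgebra.ι k (Sum.inl ⟨(i, none), Or.inr ⟨h, rfl⟩⟩))) ∧
      -- values on the trivial paths at special vertices
      (∀ i : Q.V, ∀ h : Q.specialAt i,
        φ (RingQuot.mkAlgHom k (PARel k Q) (FreeAlgebra.ι k (Sum.inl i))) =
          RingQuot.mkAlgHom k (PARelT k Q)
            (FreeAlgebra.ι k (Sum.inl ⟨(i, some true), Or.inl ⟨h, Or.inl rfl⟩⟩)) +
          RingQuot.mkAlgHom k (PARelT k Q)
            (FreeAlgebra.ι k (Sum.inl ⟨(i, some false), Or.inl ⟨h, Or.inr rfl⟩⟩))) ∧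
      -- values on the ordinary arrows
      (∀ a : Q.A, ∀ ha : ¬ Q.special a,
        φ (RingQuot.mkAlgHom k (PARel k Q) (FreeAlgebra.ι k (Sum.inr a))) =
          ∑ τ : Option Bool, ∑ σ : Option Bool,
            if h : Q.SOK (Q.tgt a).1 τ ∧ Q.SOK (Q.src a).1 σ then
              RingQuot.mkAlgHom k (PARelT k Q)
                (FreeAlgebra.ι k (Sum.inr ⟨(a, τ, σ), ha, h.1, h.2⟩))
            else 0) ∧
      -- values on the special loops
      (∀ ε : Q.A, ∀ hε : Q.special ε,
        φ (RingQuot.mkAlgHom k (PARel k Q) (FreeAlgebra.ι k (Sum.inr ε))) =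
          RingQuot.mkAlgHom k (PARelT k Q)
            (FreeAlgebra.ι k (Sum.inl
              ⟨((Q.src ε).1, some true), Or.inl ⟨⟨ε, hε, rfl⟩, Or.inl rfl⟩⟩)) -
          RingQuot.mkAlgHom k (PARelT k Q)
            (FreeAlgebra.ι k (Sum.inl
              ⟨((Q.src ε).1, some false), Or.inl ⟨⟨ε, hε, rfl⟩, Or.inr rfl⟩⟩))) ∧
      -- the inverse on the idempotents `e_{(i,±)}`
      (∀ ε : Q.A, ∀ hε : Q.special ε,
        φ.symm (RingQuot.mkAlgHom k (PARelT k Q)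
            (FreeAlgebra.ι k (Sum.inl
              ⟨((Q.src ε).1, some true), Or.inl ⟨⟨ε, hε, rfl⟩, Or.inl rfl⟩⟩))) =
          (2⁻¹ : k) • (RingQuot.mkAlgHom k (PARel k Q) (FreeAlgebra.ι k (Sum.inl (Q.src ε).1)) +
            RingQuot.mkAlgHom k (PARel k Q) (FreeAlgebra.ι k (Sum.inr ε))) ∧
        φ.symm (RingQuot.mkAlgHom k (PARelT k Q)
            (FreeAlgebra.ι k (Sum.inl
              ⟨((Q.src ε).1, some false), Or.inl ⟨⟨ε, hε, rfl⟩, Or.inr rfl⟩⟩))) =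
          (2⁻¹ : k) • (RingQuot.mkAlgHom k (PARel k Q) (FreeAlgebra.ι k (Sum.inl (Q.src ε).1)) -
            RingQuot.mkAlgHom k (PARel k Q) (FreeAlgebra.ι k (Sum.inr ε)))) := by
  refine ⟨AlgEquiv.ofAlgHom (PhiA hQ) (PsiA hQ hchar) (comp1 hQ hchar) (comp2 hQ hchar),
    ?_, ?_, ?_, ?_, ?_⟩
  · intro i h
    exact (PhiA_mk hQ _).trans ((PhiF_inl i).trans (Pv_ordinary h))
  · intro i h
    exact (PhiA_mk hQ _).trans ((PhiF_inl i).trans (Pv_special h))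
  · intro a ha
    refine (PhiA_mk hQ _).trans ((PhiF_inr a).trans ?_)
    rw [PhiG_inr, dif_neg ha]
    rfl
  · intro ε hε
    refine (PhiA_mk hQ _).trans ((PhiF_inr ε).trans ?_)
    rw [PhiG_inr, dif_pos hε]
    rfl
  · intro ε hε
    have hch : ∀ h : Q.specialAt (Q.src ε).1, h.choose = ε :=
      fun h => sg_choose_eq hQ h hε rfl
    constructor
    · refine (PsiA_mk hQ hchar _).trans ((PsiF_inl _).trans ?_)
      erw [Gv_some, if_pos rfl]
      simp only [hch]
      rfl
    · refine (PsiA_mk hQ hchar _).trans ((PsiF_inl _).trans ?_)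
      erw [Gv_some, if_neg Bool.false_ne_true]
      simp only [hch]
      rw [show RingQuot.mkAlgHom k (PARel k Q) (FreeAlgebra.ι k (Sum.inl (Q.src ε).1)) -
          RingQuot.mkAlgHom k (PARel k Q) (FreeAlgebra.ι k (Sum.inr ε)) =
          eV (Q.src ε).1 + -xA ε from kA_sub _ _]

end SG
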